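/- Let n > 1 and let a be an integer with 0 < a < n, gcd(a,n) = 1, and a ≢ 1 (mod n). Then s(1,1;n) > 2·s(1,a;n). -/

import Mathlib

open Finset in
/-- integer auxiliary sum `∑_{i<n} i * (i*a mod n)` -/
def gZ (a n : ℕ) : ℤ := ∑ i ∈ Finset.range n, (i : ℤ) * ((i * a) % n : ℕ)

/-- The sawtooth function `((x)) = x - ⌊x⌋ - 1/2` for non-integer `x`, and `0` for integer `x`. -/
def saw (x : ℚ) : ℚ := if x.den = 1 then 0 else x - ⌊x⌋ - 1/2

/-- The generalized Dedekind sum `s(a,b;n) = ∑_{i=1}^{n-1} ((ia/n))((ib/n))`. -/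
def dS (a b : ℤ) (n : ℕ) : ℚ :=
  ∑ i ∈ Finset.range n, saw (i * a / n) * saw (i * b / n)

open Finset


/-- integer version of the sum `∑ i (i*a mod n)` -/

lemma perm_sum {M : Type*} [AddCommMonoid M] (a n : ℕ) (h : Nat.gcd a n = 1)
    (f : ℕ → M) : ∑ i ∈ range n, f (i * a % n) = ∑ i ∈ range n, f i := by
  rcases Nat.lt_or_ge n 2 with hn | hn
  · interval_cases n <;> simp
  obtain ⟨c, -, hc⟩ := Nat.exists_mul_mod_eq_one_of_coprime h hn
  refine Finset.sum_nbij' (fun i => i * a % n) (fun i => i * c % n) ?_ ?_ ?_ ?_ ?_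
  · intro i hi; simp only [mem_range] at *; exact Nat.mod_lt _ (by omega)
  · intro i hi; simp only [mem_range] at *; exact Nat.mod_lt _ (by omega)
  · intro i hi; simp only [mem_range] at hi
    calc i * a % n * c % n = i * a * c % n := Nat.mod_mul_mod _ _ _
    _ = i * (a * c) % n := by ring_nf
    _ = i % n * (a * c % n) % n := by rw [Nat.mul_mod]
    _ = i := by rw [hc, Nat.mod_eq_of_lt hi, mul_one, Nat.mod_eq_of_lt hi]
  · intro i hi; simp only [mem_range] at hi
    calc i * c % n * a % n = i * c * a % n := Nat.mod_mul_mod _ _ _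
    _ = i * (a * c) % n := by ring_nf
    _ = i % n * (a * c % n) % n := by rw [Nat.mul_mod]
    _ = i := by rw [hc, Nat.mod_eq_of_lt hi, mul_one, Nat.mod_eq_of_lt hi]
  · intro i hi; rfl

lemma sum_id (n : ℕ) : 2 * ∑ i ∈ range n, (i : ℤ) = n * (n - 1) := by
  induction n with
  | zero => simp
  | succ m ih => rw [Finset.sum_range_succ]; push_cast; push_cast at ih; ring_nf; ring_nf at ih; linarith

lemma sum_sq (n : ℕ) : 6 * ∑ i ∈ range n, (i : ℤ)^2 = n * (n - 1) * (2*n - 1) := by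
  induction n with
  | zero => simp
  | succ m ih => rw [Finset.sum_range_succ]; push_cast; push_cast at ih; ring_nf; ring_nf at ih; linarith

lemma shift_sum (a : ℕ) (ha : 1 ≤ a) (f : ℕ → ℤ) (h0 : f 0 = 0) :
    ∑ j ∈ range (a-1), f (j+1) = ∑ j ∈ range a, f j := by
  conv_rhs => rw [show a = (a-1)+1 from by omega]
  rw [Finset.sum_range_succ', h0, add_zero]

lemma recip (a n : ℕ) (ha : 1 ≤ a) (hn : 1 ≤ n) (h : Nat.gcd a n = 1) :
    12 * (a:ℤ)^2 * gZ a n + 12 * (n:ℤ)^2 * gZ n a =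
    3 * (a:ℤ)^2 * n^2 * ((a:ℤ) + n - 3) + a * n * ((a:ℤ)^2 + n^2 + 1) := by
  have ha0 : 0 < a := ha
  have hn0 : 0 < n := hn
  set S2n : ℤ := ∑ i ∈ range n, (i : ℤ)^2 with hS2n
  set T1 : ℤ := ∑ i ∈ range n, (i : ℤ) with hT1
  set S2a : ℤ := ∑ i ∈ range a, (i : ℤ)^2 with hS2a
  set Ta1 : ℤ := ∑ i ∈ range a, (i : ℤ) with hTa1
  set Q : ℤ := ∑ i ∈ range n, (i : ℤ) * ((i * a / n : ℕ) : ℤ) with hQ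
  set M1 : ℤ := ∑ j ∈ range (a-1), (((j+1) * n / a : ℕ) : ℤ) with hM1
  set M2 : ℤ := ∑ j ∈ range (a-1), (((j+1) * n / a : ℕ) : ℤ)^2 with hM2
  -- h1
  have h1 : gZ a n = a * S2n - n * Q := by
    have hcg : ∀ i ∈ range n, (i:ℤ) * ((i * a) % n : ℕ) =
        (a:ℤ) * (i:ℤ)^2 - n * ((i:ℤ) * ((i * a / n : ℕ) : ℤ)) := by
      intro i _
      have hc := congrArg (Nat.cast : ℕ → ℤ) (Nat.div_add_mod (i*a) n)
      rw [Nat.cast_add, Nat.cast_mul, Nat.cast_mul] at hc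
      linear_combination (i:ℤ) * hc
    rw [gZ, Finset.sum_congr rfl hcg, Finset.sum_sub_distrib, ← Finset.mul_sum,
      ← Finset.mul_sum]
  -- indicator expansion of i*a/n
  have hq : ∀ i < n, (i*a/n) = ∑ j ∈ range a, if (j+1)*n ≤ i*a then 1 else 0 := by
    intro i hi
    have hqa : i*a/n < a := by
      rw [Nat.div_lt_iff_lt_mul hn0]
      calc i*a < n*a := (Nat.mul_lt_mul_right ha0).mpr hi
      _ = a*n := mul_comm n a
    have hfil : filter (fun j => (j+1)*n ≤ i*a) (range a) = range (i*a/n) := by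
      ext j; simp only [mem_filter, mem_range]
      constructor
      · rintro ⟨hja, hj⟩
        have := (Nat.le_div_iff_mul_le hn0).mpr hj
        omega
      · intro hj
        have h2 : (j+1) ≤ i*a/n := hj
        have := (Nat.le_div_iff_mul_le hn0).mp h2
        exact ⟨by omega, this⟩
    rw [Finset.sum_boole, hfil, Finset.card_range]
    exact (Nat.cast_id _).symm
  -- swap
  have h2 : Q = ∑ j ∈ range (a-1), (T1 - ∑ i ∈ range (((j+1)*n/a) + 1), (i:ℤ)) := by
    have step1 : Q = ∑ j ∈ range a, ∑ i ∈ range n, (if (j+1)*n ≤ i*a then (i:ℤ) else 0) := by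
      rw [hQ, Finset.sum_comm]
      apply Finset.sum_congr rfl
      intro i hi
      rw [hq i (mem_range.mp hi)]
      push_cast
      rw [Finset.mul_sum]
      apply Finset.sum_congr rfl
      intro j _
      split <;> simp
    have hsplit := Finset.sum_range_succ
      (fun j => ∑ i ∈ range n, (if (j+1)*n ≤ i*a then (i:ℤ) else 0)) (a-1)
    rw [show a-1+1 = a from by omega] at hsplit
    have hlast : ∑ i ∈ range n, (if a*n ≤ i*a then (i:ℤ) else 0) = 0 := by
      apply Finset.sum_eq_zero
      intro i hi
      rw [if_neg]
      have : i * a < a * n := by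
        calc i*a < n*a := (Nat.mul_lt_mul_right ha0).mpr (mem_range.mp hi)
        _ = a*n := mul_comm n a
      omega
    rw [step1, hsplit, hlast, add_zero]
    apply Finset.sum_congr rfl
    intro j hj
    have hj' : j < a - 1 := mem_range.mp hj
    have hnd : ¬ a ∣ (j+1)*n := by
      intro hd
      have hd2 : a ∣ j+1 := Nat.Coprime.dvd_of_dvd_mul_right h hd
      have := Nat.le_of_dvd (by omega) hd2
      omega
    have hcond : ∀ i, ((j+1)*n ≤ i*a ↔ (j+1)*n/a < i) := by
      intro i
      constructor
      · intro hle
        have hne : (j+1)*n ≠ i*a := fun he => hnd (by rw [he]; exact dvd_mul_left a i)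
        exact (Nat.div_lt_iff_lt_mul ha0).mpr (by omega)
      · intro hlt
        have := (Nat.div_lt_iff_lt_mul ha0).mp hlt
        omega
    have hmn : (j+1)*n/a + 1 ≤ n := by
      have : (j+1)*n/a < n := by
        rw [Nat.div_lt_iff_lt_mul ha0]
        have hle1 : (j+1)*n ≤ (a-1)*n := Nat.mul_le_mul_right n (by omega)
        have hle2 : (a-1)*n < n*a := by
          calc (a-1)*n < a*n := (Nat.mul_lt_mul_right hn0).mpr (by omega)
          _ = n*a := mul_comm a n
        omega
      omega
    have hfil2 : filter (fun i => (j+1)*n ≤ i*a) (range n) = Ico ((j+1)*n/a + 1) n := by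
      ext i; simp only [mem_filter, mem_range, mem_Ico, hcond i]; omega
    rw [hT1, ← Finset.sum_filter, hfil2, Finset.sum_Ico_eq_sub _ hmn]
    try ring
  -- expand h2 into M1, M2
  have h2' : 2 * Q = 2*((a:ℤ)-1) * T1 - M2 - M1 := by
    have hexp : ∀ j ∈ range (a-1),
        (2:ℤ) * (T1 - ∑ i ∈ range (((j+1)*n/a) + 1), (i:ℤ)) =
        2*T1 - ((((j+1)*n/a : ℕ):ℤ)^2 + (((j+1)*n/a : ℕ):ℤ)) := by
      intro j _
      have hsi := sum_id (((j+1)*n/a) + 1)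
      rw [Nat.cast_add_one] at hsi
      linear_combination -hsi
    rw [h2, Finset.mul_sum, Finset.sum_congr rfl hexp, Finset.sum_sub_distrib,
      Finset.sum_add_distrib, Finset.sum_const, Finset.card_range]
    have hca : ((a-1 : ℕ) : ℤ) = (a:ℤ) - 1 := by omega
    rw [nsmul_eq_mul, hca]
    ring
  -- division relation for m_j
  have hdm : ∀ j ∈ range (a-1), ((a:ℤ) * (((j+1)*n/a : ℕ):ℤ)
      = ((j+1:ℕ):ℤ)*n - (((j+1)*n % a : ℕ):ℤ)) := by
    intro j _
    have hc := congrArg (Nat.cast : ℕ → ℤ) (Nat.div_add_mod ((j+1)*n) a)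
    rw [Nat.cast_add, Nat.cast_mul, Nat.cast_mul] at hc
    linarith
  -- sums of s_j
  have hs1 : ∑ j ∈ range (a-1), (((j+1)*n % a : ℕ) : ℤ) = Ta1 := by
    rw [shift_sum a ha (fun x => ((x*n % a : ℕ) : ℤ)) (by simp)]
    have hp := perm_sum n a (by rwa [Nat.gcd_comm]) (fun x => (x:ℤ))
    simpa using hp
  have hs2 : ∑ j ∈ range (a-1), (((j+1)*n % a : ℕ) : ℤ)^2 = S2a := by
    rw [shift_sum a ha (fun x => ((x*n % a : ℕ) : ℤ)^2) (by simp)]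
    have hp := perm_sum n a (by rwa [Nat.gcd_comm]) (fun x => (x:ℤ)^2)
    simpa using hp
  have hs3 : ∑ j ∈ range (a-1), ((j+1:ℕ):ℤ) * (((j+1)*n % a : ℕ) : ℤ) = gZ n a := by
    rw [shift_sum a ha (fun x => (x:ℤ) * ((x*n % a : ℕ) : ℤ)) (by simp)]
    rfl
  have hsj1 : ∑ j ∈ range (a-1), ((j+1:ℕ):ℤ) = Ta1 :=
    shift_sum a ha (fun x => (x:ℤ)) (by simp)
  have hsj2 : ∑ j ∈ range (a-1), ((j+1:ℕ):ℤ)^2 = S2a :=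
    shift_sum a ha (fun x => (x:ℤ)^2) (by simp)
  -- h3
  have h3 : (a:ℤ) * M1 = ((n:ℤ)-1) * Ta1 := by
    rw [hM1, Finset.mul_sum]
    rw [Finset.sum_congr rfl hdm, Finset.sum_sub_distrib, hs1]
    have he : ∑ j ∈ range (a-1), ((j+1:ℕ):ℤ)*n = n * Ta1 := by
      rw [← hsj1, Finset.mul_sum]
      apply Finset.sum_congr rfl
      intro j _; ring
    rw [he]; ring
  -- h4
  have h4 : (a:ℤ)^2 * M2 = ((n:ℤ)^2+1) * S2a - 2*n*gZ n a := by
    have key : ∀ j ∈ range (a-1), (a:ℤ)^2 * (((j+1)*n/a : ℕ):ℤ)^2 =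
        ((j+1:ℕ):ℤ)^2*(n:ℤ)^2 - 2*n*(((j+1:ℕ):ℤ) * (((j+1)*n % a : ℕ) : ℤ))
          + (((j+1)*n % a : ℕ) : ℤ)^2 := by
      intro j hj
      have ht := hdm j hj
      linear_combination ((a:ℤ) * (((j+1)*n/a : ℕ):ℤ) + ((j+1:ℕ):ℤ)*n
        - (((j+1)*n % a : ℕ):ℤ)) * ht
    rw [hM2, Finset.mul_sum]
    rw [Finset.sum_congr rfl key, Finset.sum_add_distrib, Finset.sum_sub_distrib, hs2]
    have e1 : ∑ j ∈ range (a-1), ((j+1:ℕ):ℤ)^2*(n:ℤ)^2 = (n:ℤ)^2 * S2a := by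
      rw [← hsj2, Finset.mul_sum]
      apply Finset.sum_congr rfl
      intro j _; ring
    have e2 : ∑ j ∈ range (a-1), 2*(n:ℤ)*(((j+1:ℕ):ℤ) * (((j+1)*n % a : ℕ) : ℤ))
        = 2*n*gZ n a := by
      rw [← hs3, Finset.mul_sum]
    rw [e1, e2]; ring
  -- finish
  have g1 := sum_id n
  have g2 := sum_sq n
  have g3 := sum_id a
  have g4 := sum_sq a
  rw [← hT1] at g1
  rw [← hS2n] at g2
  rw [← hTa1] at g3
  rw [← hS2a] at g4
  linear_combination (12*(a:ℤ)^2)*h1 - 6*(a:ℤ)^2*(n:ℤ)*h2' + 6*(a:ℤ)*(n:ℤ)*h3 + 6*(n:ℤ)*h4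
    + 2*(a:ℤ)^3*g2 - 6*(a:ℤ)^2*((a:ℤ)-1)*(n:ℤ)*g1 + 3*(a:ℤ)*(n:ℤ)*((n:ℤ)-1)*g3 + (n:ℤ)*((n:ℤ)^2+1)*g4

lemma mod_key {a n i : ℕ} (h : Nat.gcd a n = 1) (hi0 : 0 < i) (hin : i < n) :
    0 < i * a % n := by
  rcases Nat.eq_zero_or_pos (i * a % n) with h0 | h1
  · exfalso
    have hdvd : n ∣ i * a := Nat.dvd_of_mod_eq_zero h0
    have hni : n ∣ i := (Nat.Coprime.dvd_of_dvd_mul_right (by rwa [Nat.gcd_comm] at h) hdvd)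
    have := Nat.le_of_dvd hi0 hni
    omega
  · exact h1

lemma gZ_one (n : ℕ) : gZ 1 n = ∑ i ∈ range n, (i:ℤ)^2 := by
  apply Finset.sum_congr rfl
  intro i hi
  rw [mul_one, Nat.mod_eq_of_lt (mem_range.mp hi)]
  ring

lemma gZ_mod (a n : ℕ) : gZ (a % n) n = gZ a n := by
  apply Finset.sum_congr rfl
  intro i _
  congr 1
  rw [Nat.mul_mod, Nat.mul_mod i a]
  simp [Nat.mod_mod_of_dvd]

lemma gZ_neg (a n : ℕ) (ha0 : 0 < a) (han : a < n) (h : Nat.gcd a n = 1) :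
    2 * (gZ (n - a) n + gZ a n) = (n:ℤ)^2 * ((n:ℤ) - 1) := by
  have key : ∀ i ∈ range n, (i:ℤ) * ((i * (n-a)) % n : ℕ) + (i:ℤ) * ((i * a) % n : ℕ)
      = (i:ℤ) * n := by
    intro i hi
    have hin : i < n := mem_range.mp hi
    rcases Nat.eq_zero_or_pos i with h0 | hi0
    · subst h0; simp
    have hr : 0 < i * a % n := mod_key h hi0 hin
    have hr2 : i * a % n < n := Nat.mod_lt _ (by omega)
    have hsum : (i * (n - a) + i * a) % n = 0 := by
      rw [← Nat.mul_add, Nat.sub_add_cancel (le_of_lt han), Nat.mul_mod_left]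
    have hmod : (i * (n - a) % n + i * a % n) % n = 0 := by
      rw [← Nat.add_mod]; exact hsum
    have hlt : i * (n - a) % n < n := Nat.mod_lt _ (by omega)
    have hdvd : n ∣ (i * (n - a) % n + i * a % n) := Nat.dvd_of_mod_eq_zero hmod
    obtain ⟨k, hk⟩ := hdvd
    have hk1 : k = 1 := by
      rcases k with _ | _ | k
      · omega
      · rfl
      · exfalso
        have : n * 2 ≤ n * (k + 1 + 1) := Nat.mul_le_mul_left n (by omega)
        omega
    subst hk1
    have heq : i * (n - a) % n = n - i * a % n := by omega
    rw [heq]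
    have : ((n - i * a % n : ℕ) : ℤ) = (n:ℤ) - ((i * a % n : ℕ) : ℤ) := by
      rw [Nat.cast_sub (le_of_lt hr2)]
    rw [this]
    ring
  rw [gZ, gZ, ← Finset.sum_add_distrib, Finset.sum_congr rfl key]
  have hsi := sum_id n
  have : ∑ i ∈ range n, (i:ℤ) * n = (∑ i ∈ range n, (i:ℤ)) * n := by
    rw [Finset.sum_mul]
  rw [this]
  linear_combination (n:ℤ) * hsi

lemma polyB (a n : ℤ) (h2 : 2 ≤ a) (hn : 2*a - 1 ≤ n) :
    2*(3 * a^2 * n^2 * (a + n - 3) + a * n * (a^2 + n^2 + 1))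
        - 12*n^2*a^2*(a-1) + 4*n^2*a*(a-1)*(2*a-1)
        < a^2 * (n * (n - 1) * (7*n - 2)) := by
  nlinarith [mul_nonneg (mul_nonneg (sub_nonneg.mpr h2) (sub_nonneg.mpr hn))
      (by linarith : (0:ℤ) ≤ n),
    mul_nonneg (mul_nonneg (sub_nonneg.mpr h2) (sub_nonneg.mpr hn)) (by linarith : (0:ℤ) ≤ a),
    mul_nonneg (sub_nonneg.mpr h2) (sub_nonneg.mpr hn),
    mul_pos (by linarith : (0:ℤ) < a) (by linarith : (0:ℤ) < n),
    mul_nonneg (mul_nonneg (sub_nonneg.mpr hn) (sub_nonneg.mpr hn)) (by linarith : (0:ℤ) ≤ a),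
    sq_nonneg (n - 2*a + 1), sq_nonneg (a-2)]

lemma polyA (a n : ℤ) (h3 : 3 ≤ a) (han : a + 1 ≤ n) :
    2*(3 * a^2 * n^2 * (a + n - 3) + a * n * (a^2 + n^2 + 1))
        - 12*n^2*a^2*(a-1) + n^2*(a * (a - 1) * (7*a - 2))
        ≤ a^2 * (n * (n - 1) * (7*n - 2)) := by
  nlinarith [mul_nonneg (mul_nonneg (sub_nonneg.mpr h3) (by linarith : (0:ℤ) ≤ n - a - 1))
      (by linarith : (0:ℤ) ≤ n),
    mul_nonneg (mul_nonneg (sub_nonneg.mpr h3) (by linarith : (0:ℤ) ≤ n - a - 1))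
      (by linarith : (0:ℤ) ≤ a),
    mul_nonneg (sub_nonneg.mpr h3) (by linarith : (0:ℤ) ≤ n - a - 1),
    mul_pos (by linarith : (0:ℤ) < a) (by linarith : (0:ℤ) < n),
    mul_nonneg (mul_nonneg (by linarith : (0:ℤ) ≤ n - a - 1)
      (by linarith : (0:ℤ) ≤ n - a - 1)) (by linarith : (0:ℤ) ≤ a),
    sq_nonneg (n - a - 1), sq_nonneg (a-3)]

lemma main_ind : ∀ n : ℕ, ∀ a : ℕ, 2 ≤ n → 0 < a → a < n → Nat.gcd a n = 1 → a ≠ 1 →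
    24 * gZ a n < (n:ℤ) * ((n:ℤ) - 1) * (7*(n:ℤ) - 2) := by
  intro n
  induction n using Nat.strong_induction_on with
  | _ n IH =>
  intro a hn ha0 han hco ha1
  have ha2 : 2 ≤ a := by omega
  have hn3 : 3 ≤ n := by omega
  set b := n % a with hb
  have hb0 : 0 < b := by
    rcases Nat.eq_zero_or_pos b with h0 | h1
    · exfalso
      have hd : a ∣ n := Nat.dvd_of_mod_eq_zero h0
      have := Nat.gcd_eq_left hd
      omega
    · exact h1
  have hba : b < a := Nat.mod_lt _ (by omega)
  have hgba : Nat.gcd b a = 1 := by rw [hb, ← Nat.gcd_rec]; exact hco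
  have hrec := recip a n (by omega) (by omega) hco
  have hmod : gZ n a = gZ b a := by rw [hb, gZ_mod]
  rw [hmod] at hrec
  have hanz : (0:ℤ) < (a:ℤ) := by exact_mod_cast ha0
  have hAcast : (2:ℤ) ≤ (a:ℤ) := by exact_mod_cast ha2
  have hNcast : (a:ℤ) + 1 ≤ (n:ℤ) := by exact_mod_cast han
  by_cases hcase : b = a - 1
  · -- case B : n ≡ -1 mod a
    have hneg := gZ_neg 1 a (by omega) (by omega) (by simp [Nat.gcd_comm])
    rw [gZ_one] at hneg
    have hs2a := sum_sq a
    have hn2a : 2*a - 1 ≤ n := by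
      have hdm := Nat.div_add_mod n a
      have hq1 : 1 ≤ n / a := (Nat.one_le_div_iff (by omega)).mpr (by omega)
      have : a * 1 ≤ a * (n / a) := Nat.mul_le_mul_left a hq1
      omega
    have hn2aZ : 2*(a:ℤ) - 1 ≤ (n:ℤ) := by
      have : ((2*a - 1 : ℕ):ℤ) ≤ (n:ℤ) := by exact_mod_cast hn2a
      omega
    have hgb : gZ b a = gZ (a-1) a := by rw [hcase]
    rw [hgb] at hrec
    -- 24 a^2 X = 2P - 12 n^2 a^2 (a-1) + 24 n^2 S2a
    have hx : 24*(a:ℤ)^2 * gZ a n =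
        2*(3 * (a:ℤ)^2 * n^2 * ((a:ℤ) + n - 3) + a * n * ((a:ℤ)^2 + n^2 + 1))
        - 12*(n:ℤ)^2*(a:ℤ)^2*((a:ℤ)-1) + 4*(n:ℤ)^2*(a:ℤ)*((a:ℤ)-1)*(2*(a:ℤ)-1) := by
      linear_combination 2*hrec - 12*(n:ℤ)^2*hneg + 4*(n:ℤ)^2*hs2a
    have hpoly : 2*(3 * (a:ℤ)^2 * n^2 * ((a:ℤ) + n - 3) + a * n * ((a:ℤ)^2 + n^2 + 1))
        - 12*(n:ℤ)^2*(a:ℤ)^2*((a:ℤ)-1) + 4*(n:ℤ)^2*(a:ℤ)*((a:ℤ)-1)*(2*(a:ℤ)-1)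
        < (a:ℤ)^2 * ((n:ℤ) * ((n:ℤ) - 1) * (7*(n:ℤ) - 2)) :=
      polyB (a:ℤ) (n:ℤ) hAcast hn2aZ
    have h24 : 24*(a:ℤ)^2 * gZ a n < (a:ℤ)^2 * ((n:ℤ) * ((n:ℤ) - 1) * (7*(n:ℤ) - 2)) := by
      rw [hx]; exact hpoly
    have : (a:ℤ)^2 * (24 * gZ a n) < (a:ℤ)^2 * ((n:ℤ) * ((n:ℤ) - 1) * (7*(n:ℤ) - 2)) := by
      linarith [h24]
    exact lt_of_mul_lt_mul_left this (by positivity)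
  · -- case A
    have ha3 : 3 ≤ a := by omega
    have hab1 : a - b ≠ 1 := by omega
    have hgab : Nat.gcd (a-b) a = 1 := by
      have hd1 := Nat.gcd_dvd_left (a-b) a
      have hd2 := Nat.gcd_dvd_right (a-b) a
      have hd3 : Nat.gcd (a-b) a ∣ b := by
        have := Nat.dvd_sub hd2 hd1
        rwa [Nat.sub_sub_self (le_of_lt hba)] at this
      have := Nat.dvd_gcd hd3 hd2
      rw [hgba] at this
      exact Nat.dvd_one.mp this
    have hIH := IH a han (a-b) ha2 (by omega) (by omega) hgab hab1
    have hneg := gZ_neg (a-b) a (by omega) (by omega) hgab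
    rw [Nat.sub_sub_self (le_of_lt hba)] at hneg
    have hx : 24*(a:ℤ)^2 * gZ a n =
        2*(3 * (a:ℤ)^2 * n^2 * ((a:ℤ) + n - 3) + a * n * ((a:ℤ)^2 + n^2 + 1))
        - 12*(n:ℤ)^2*(a:ℤ)^2*((a:ℤ)-1) + 24*(n:ℤ)^2* gZ (a-b) a := by
      linear_combination 2*hrec - 12*(n:ℤ)^2*hneg
    have hy : 24*(n:ℤ)^2* gZ (a-b) a < (n:ℤ)^2*((a:ℤ) * ((a:ℤ) - 1) * (7*(a:ℤ) - 2)) := by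
      have hnn : (0:ℤ) < (n:ℤ)^2 := by positivity
      have h := mul_lt_mul_of_pos_left hIH hnn
      linarith [h]
    have hA3 : (3:ℤ) ≤ (a:ℤ) := by exact_mod_cast ha3
    have hpoly : 2*(3 * (a:ℤ)^2 * n^2 * ((a:ℤ) + n - 3) + a * n * ((a:ℤ)^2 + n^2 + 1))
        - 12*(n:ℤ)^2*(a:ℤ)^2*((a:ℤ)-1) + (n:ℤ)^2*((a:ℤ) * ((a:ℤ) - 1) * (7*(a:ℤ) - 2))
        ≤ (a:ℤ)^2 * ((n:ℤ) * ((n:ℤ) - 1) * (7*(n:ℤ) - 2)) :=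
      polyA (a:ℤ) (n:ℤ) hA3 hNcast
    have h24 : 24*(a:ℤ)^2 * gZ a n < (a:ℤ)^2 * ((n:ℤ) * ((n:ℤ) - 1) * (7*(n:ℤ) - 2)) := by
      rw [hx]; linarith
    have : (a:ℤ)^2 * (24 * gZ a n) < (a:ℤ)^2 * ((n:ℤ) * ((n:ℤ) - 1) * (7*(n:ℤ) - 2)) := by
      linarith [h24]
    exact lt_of_mul_lt_mul_left this (by positivity)

lemma saw_div (m n : ℕ) (hn : 0 < n) (hnd : ¬ n ∣ m) :
    saw ((m:ℚ)/n) = ((m % n : ℕ) : ℚ)/n - 1/2 := by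
  have hn0 : ((n:ℚ)) ≠ 0 := by positivity
  have hden : ((m:ℚ)/n).den ≠ 1 := by
    intro h1
    have hq := (Rat.den_eq_one_iff _).mp h1
    apply hnd
    have hmul : (((m:ℚ)/n).num : ℚ) * n = m := by
      rw [hq]; field_simp
    have hz : ((m:ℤ):ℚ) = ((n:ℤ):ℚ) * (((m:ℚ)/n).num : ℚ) := by push_cast; linarith
    have hz2 : (m:ℤ) = (n:ℤ) * ((m:ℚ)/n).num := by exact_mod_cast hz
    have : (n:ℤ) ∣ (m:ℤ) := ⟨_, hz2⟩
    exact_mod_cast this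
  rw [saw, if_neg hden]
  rw [Rat.floor_natCast_div_natCast, ← Int.natCast_div, Int.cast_natCast]
  have hdm : (m:ℚ) = n * ((m/n : ℕ):ℚ) + ((m % n : ℕ):ℚ) := by
    exact_mod_cast congrArg (Nat.cast : ℕ → ℚ) (Nat.div_add_mod m n).symm
  field_simp
  linarith
lemma saw_dvd (m n : ℕ) (hn : 0 < n) (hd : n ∣ m) : saw ((m:ℚ)/n) = 0 := by
  obtain ⟨k, rfl⟩ := hd
  have hn0 : ((n:ℚ)) ≠ 0 := by positivity
  have : ((n*k : ℕ):ℚ)/n = ((k:ℕ):ℚ) := by push_cast; field_simp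
  rw [this, saw, if_pos (Rat.den_natCast k)]

lemma dS_eq (a n : ℕ) (hn : 2 ≤ n) (h : Nat.gcd a n = 1) :
    4*(n:ℚ)^2 * dS 1 (a:ℤ) n = 4*((gZ a n : ℤ) : ℚ) - (n:ℚ)^2*((n:ℚ)-1) := by
  have hn0 : 0 < n := by omega
  have hnq : ((n:ℚ)) ≠ 0 := by positivity
  have key : ∀ i ∈ range n, 4*(n:ℚ)^2 * (saw (↑i * ((1:ℤ):ℚ) / ↑n) * saw (↑i * ((a:ℤ):ℚ) / ↑n))
      = (2*(i:ℚ) - n)*(2*((i*a % n : ℕ):ℚ) - n) - (if i = 0 then (n:ℚ)^2 else 0) := by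
    intro i hi
    have hin : i < n := mem_range.mp hi
    rcases Nat.eq_zero_or_pos i with rfl | hi0
    · have h0 : saw ((0:ℚ) * ((1:ℤ):ℚ) / ↑n) = 0 := by
        have : (0:ℚ) * ((1:ℤ):ℚ) / ↑n = ((0:ℕ):ℚ)/n := by push_cast; ring
        rw [this, saw_dvd 0 n hn0 (dvd_zero n)]
      rw [show ((0:ℕ):ℚ) = (0:ℚ) from rfl, h0]
      simp
      ring
    · have hnd1 : ¬ n ∣ i := fun hd => by have := Nat.le_of_dvd hi0 hd; omega
      have hnda : ¬ n ∣ i*a := by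
        rw [Nat.dvd_iff_mod_eq_zero]
        have := mod_key h hi0 hin
        omega
      have e1 : (↑i * ((1:ℤ):ℚ) / ↑n) = ((i:ℕ):ℚ)/n := by push_cast; ring
      have e2 : (↑i * ((a:ℤ):ℚ) / ↑n) = ((i*a:ℕ):ℚ)/n := by push_cast; ring
      rw [e1, e2, saw_div i n hn0 hnd1, saw_div (i*a) n hn0 hnda,
        Nat.mod_eq_of_lt hin, if_neg (by omega : ¬ i = 0)]
      field_simp
      ring
  rw [dS, Finset.mul_sum, Finset.sum_congr rfl key, Finset.sum_sub_distrib]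
  have hite : ∑ i ∈ range n, (if i = 0 then (n:ℚ)^2 else 0) = (n:ℚ)^2 := by
    rw [Finset.sum_ite_eq' (range n) 0 (fun _ => (n:ℚ)^2), if_pos (mem_range.mpr hn0)]
  rw [hite]
  have expand : ∀ i ∈ range n, (2*(i:ℚ) - n)*(2*((i*a % n : ℕ):ℚ) - n)
      = 4*((i:ℚ)*((i*a % n : ℕ):ℚ)) - 2*(n:ℚ)*(i:ℚ) - 2*(n:ℚ)*((i*a % n : ℕ):ℚ) + (n:ℚ)^2 := by
    intro i _; ring
  rw [Finset.sum_congr rfl expand]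
  have hGc : ((gZ a n : ℤ):ℚ) = ∑ i ∈ range n, (i:ℚ)*((i*a%n : ℕ):ℚ) := by
    rw [gZ, Int.cast_sum]
    apply Finset.sum_congr rfl
    intro i _
    push_cast
    rfl
  have hG : ∑ i ∈ range n, 4*((i:ℚ)*((i*a % n : ℕ):ℚ)) = 4*((gZ a n : ℤ):ℚ) := by
    rw [hGc, Finset.mul_sum]
  have hid : (2:ℚ) * ∑ i ∈ range n, (i:ℚ) = (n:ℚ)*((n:ℚ)-1) := by
    have h' := congrArg (Int.cast : ℤ → ℚ) (sum_id n)
    push_cast at h' ⊢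
    linarith [h']
  have hperm : ∑ i ∈ range n, ((i*a % n : ℕ):ℚ) = ∑ i ∈ range n, (i:ℚ) :=
    perm_sum a n h (fun x => (x:ℚ))
  have h2 : ∑ i ∈ range n, 2*(n:ℚ)*(i:ℚ) = (n:ℚ)*((n:ℚ)*((n:ℚ)-1)) := by
    rw [← Finset.mul_sum]
    linear_combination (n:ℚ) * hid
  have h3 : ∑ i ∈ range n, 2*(n:ℚ)*((i*a % n : ℕ):ℚ) = (n:ℚ)*((n:ℚ)*((n:ℚ)-1)) := by
    rw [← Finset.mul_sum, hperm]
    linear_combination (n:ℚ) * hid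
  rw [Finset.sum_add_distrib, Finset.sum_sub_distrib, Finset.sum_sub_distrib, hG, h2, h3,
    Finset.sum_const, Finset.card_range, nsmul_eq_mul]
  ring

theorem stmt_8 (n : ℕ) (hn : 1 < n) (a : ℤ) (ha0 : 0 < a) (han : a < (n:ℤ))
    (hco : Int.gcd a n = 1) (hne1 : ¬ a ≡ 1 [ZMOD (n:ℤ)]) :
    2 * dS 1 a n < dS 1 1 n := by
  set A : ℕ := a.toNat with hA
  have haA : (A:ℤ) = a := Int.toNat_of_nonneg (le_of_lt ha0)
  have hA0 : 0 < A := by omega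
  have hAn : A < n := by omega
  have hgcd : Nat.gcd A n = 1 := by
    rw [Int.gcd, Int.natAbs_natCast] at hco
    rwa [show a.natAbs = A by omega] at hco
  have hA1 : A ≠ 1 := by
    intro h1
    apply hne1
    have : a = 1 := by omega
    rw [this]
  have hmain := main_ind n A (by omega) hA0 hAn hgcd hA1
  have e1 := dS_eq A n (by omega) hgcd
  have e2 := dS_eq 1 n (by omega) (Nat.gcd_one_left n)
  rw [haA] at e1
  have hg1 : 6 * gZ 1 n = (n:ℤ) * ((n:ℤ) - 1) * (2*(n:ℤ) - 1) := by
    rw [gZ_one]; exact sum_sq n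
  have hg1q : 6 * ((gZ 1 n : ℤ):ℚ) = (n:ℚ) * ((n:ℚ) - 1) * (2*(n:ℚ) - 1) := by
    exact_mod_cast congrArg (Int.cast : ℤ → ℚ) hg1
  have hmq : 24 * ((gZ A n : ℤ):ℚ) < (n:ℚ) * ((n:ℚ) - 1) * (7*(n:ℚ) - 2) := by
    exact_mod_cast hmain
  have hpos : (0:ℚ) < 4*(n:ℚ)^2 := by positivity
  rw [← mul_lt_mul_iff_right₀ hpos]
  simp only [Nat.cast_one] at e2
  nlinarith [e1, e2, hg1q, hmq]
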